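/- Let (Λ₀, Λ) be a finitely aligned relative category of paths and let v be a vertex of Λ₀. Then the map E ↦ E ∩ Λ₀ restricts to a bijection from 𝒜(Λ₀,Λ)_v onto 𝒜(Λ₀)_v that preserves binary unions, binary intersections, and set differences, where 𝒜(Λ₀)_v = 𝒜(Λ₀,Λ₀)_v is the corresponding ring of sets on vΛ₀ for the category of paths Λ₀. Moreover these bijections are equivariant for the shifts by elements of Λ₀: for α ∈ Λ₀, (αE) ∩ Λ₀ = α(E ∩ Λ₀) for every E ∈ 𝒜(Λ₀,Λ)_{s(α)}, and σ^α(E ∩ αΛ) ∩ Λ₀ = σ^α((E ∩ Λ₀) ∩ αΛ₀) for every E ∈ 𝒜(Λ₀,Λ)_{r(α)}. -/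

import Mathlib

universe u v

/-- A category of paths: a small category (objects identified with identity
morphisms) with left and right cancellation and no inverses. -/
structure CategoryOfPaths (Λ : Type u) where
  s : Λ → Λ
  r : Λ → Λ
  comp : Λ → Λ → Λ
  s_comp : ∀ {α β : Λ}, s α = r β → s (comp α β) = s β
  r_comp : ∀ {α β : Λ}, s α = r β → r (comp α β) = r α
  comp_assoc : ∀ {α β γ : Λ}, s α = r β → s β = r γ →
    comp (comp α β) γ = comp α (comp β γ)
  id_comp : ∀ α : Λ, comp (r α) α = α
  comp_id : ∀ α : Λ, comp α (s α) = α
  s_r : ∀ α : Λ, s (r α) = r α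
  r_r : ∀ α : Λ, r (r α) = r α
  r_s : ∀ α : Λ, r (s α) = s α
  s_s : ∀ α : Λ, s (s α) = s α
  left_cancel : ∀ {α β γ : Λ}, s α = r β → s α = r γ → comp α β = comp α γ → β = γ
  right_cancel : ∀ {β γ α : Λ}, s β = r α → s γ = r α → comp β α = comp γ α → β = γ
  no_inverses : ∀ {α β : Λ}, s α = r β → comp α β = s β → α = s β ∧ β = s β

variable {Λ : Type u}

/-- The tail set `αΛ`. -/
def pTail (C : CategoryOfPaths Λ) (α : Λ) : Set Λ :=
  {x | ∃ β, C.s α = C.r β ∧ x = C.comp α β}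

/-- `vΛ`, the paths with range `v`. -/
def pRng (C : CategoryOfPaths Λ) (w : Λ) : Set Λ := {α | C.r α = w}

/-- `Λv`, the paths with source `v`. -/
def pSrc (C : CategoryOfPaths Λ) (w : Λ) : Set Λ := {α | C.s α = w}

/-- `[β]`, the initial segments of `β`. -/
def pSeg (C : CategoryOfPaths Λ) (β : Λ) : Set Λ := {α | β ∈ pTail C α}

/-- `α ⋔ β`. -/
def pMeets (C : CategoryOfPaths Λ) (α β : Λ) : Prop :=
  (pTail C α ∩ pTail C β).Nonempty

/-- `αE`. -/
def pMulSet (C : CategoryOfPaths Λ) (α : Λ) (E : Set Λ) : Set Λ :=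
  {x | ∃ β ∈ E, C.s α = C.r β ∧ x = C.comp α β}

/-- `σ^α(E ∩ αΛ)`, computed inside an ambient subcategory `S`. -/
def pShiftIn (C : CategoryOfPaths Λ) (S : Set Λ) (α : Λ) (E : Set Λ) : Set Λ :=
  {β | β ∈ S ∧ C.s α = C.r β ∧ C.comp α β ∈ E}

/-- `σ^α(E ∩ αΛ)`. -/
def pShift (C : CategoryOfPaths Λ) (α : Λ) (E : Set Λ) : Set Λ :=
  {β | C.s α = C.r β ∧ C.comp α β ∈ E}

/-- `⋁F`: the minimal common extensions of `F`. -/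
def pMinExt (C : CategoryOfPaths Λ) (F : Set Λ) : Set Λ :=
  {ε | (∀ α ∈ F, ε ∈ pTail C α) ∧
    ∀ γ, (∀ α ∈ F, γ ∈ pTail C α) → ε ∈ pTail C γ → γ = ε}

/-- `α ∨ β`: the minimal common extensions of `α` and `β`. -/
def pMinCE (C : CategoryOfPaths Λ) (α β : Λ) : Set Λ := pMinExt C {α, β}

/-- A subcategory of a category of paths, as a set of morphisms. -/
structure IsSubcategory (C : CategoryOfPaths Λ) (Λ₀ : Set Λ) : Prop where
  comp_mem : ∀ {α β : Λ}, α ∈ Λ₀ → β ∈ Λ₀ → C.s α = C.r β → C.comp α β ∈ Λ₀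
  s_mem : ∀ {α : Λ}, α ∈ Λ₀ → C.s α ∈ Λ₀
  r_mem : ∀ {α : Λ}, α ∈ Λ₀ → C.r α ∈ Λ₀

/-- A finitely aligned category of paths. -/
def FinitelyAligned (C : CategoryOfPaths Λ) : Prop :=
  ∀ α β : Λ, ∃ G : Set Λ, G.Finite ∧
    pTail C α ∩ pTail C β = ⋃ ε ∈ G, pTail C ε

/-- A finitely aligned relative category of paths `(Λ₀, Λ)`. -/
def RelFinitelyAligned (C : CategoryOfPaths Λ) (Λ₀ : Set Λ) : Prop :=
  (∀ α ∈ Λ₀, ∀ β ∈ Λ₀, ∃ G : Set Λ, G.Finite ∧ G ⊆ Λ₀ ∧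
      pTail C α ∩ pTail C β = ⋃ ε ∈ G, pTail C ε) ∧
  (∀ α ∈ Λ₀, pTail C α ∩ Λ₀ = pMulSet C α Λ₀)

/-- A ring of sets: contains `∅` and is closed under `∪`, `∩`, and `\`. -/
def IsSetRing {γ : Type v} (R : Set (Set γ)) : Prop :=
  ∅ ∈ R ∧ (∀ E ∈ R, ∀ F ∈ R, E ∪ F ∈ R) ∧ (∀ E ∈ R, ∀ F ∈ R, E ∩ F ∈ R) ∧
    (∀ E ∈ R, ∀ F ∈ R, E \ F ∈ R)

/-- A ring of sets on `S`: a ring of sets all of whose members are subsets of `S`. -/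
def IsSetRingOn {γ : Type v} (S : Set γ) (R : Set (Set γ)) : Prop :=
  IsSetRing R ∧ ∀ E ∈ R, E ⊆ S

/-- The ring of sets generated by a collection. -/
def setRingGen {γ : Type v} (G : Set (Set γ)) : Set (Set γ) :=
  ⋂₀ {R | IsSetRing R ∧ G ⊆ R}

/-- The ring of sets on `S` generated by a collection. -/
def setRingGenOn {γ : Type v} (S : Set γ) (G : Set (Set γ)) : Set (Set γ) :=
  ⋂₀ {R | IsSetRingOn S R ∧ G ⊆ R}

/-- A zigzag: a list of pairs `(αᵢ, βᵢ)` with `r αᵢ = r βᵢ` and `s αᵢ₊₁ = s βᵢ`. -/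
def IsZigzag (C : CategoryOfPaths Λ) (l : List (Λ × Λ)) : Prop :=
  (∀ p ∈ l, C.r p.1 = C.r p.2) ∧ l.Chain' (fun p q => C.s q.1 = C.s p.2)

/-- The (graph of the) zigzag map `φ_ζ = σ^{α₁} β₁ ⋯ σ^{αₙ} βₙ`, computed
inside an ambient subcategory `S`. -/
def zigzagRelIn (C : CategoryOfPaths Λ) (S : Set Λ) : List (Λ × Λ) → Λ → Λ → Prop
  | [], x, y => x = y ∧ x ∈ S
  | p :: rest, x, y => ∃ z, zigzagRelIn C S rest x z ∧ C.s p.2 = C.r z ∧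
      C.s p.1 = C.r y ∧ y ∈ S ∧ C.comp p.2 z = C.comp p.1 y

/-- `A(ζ)`: the domain of the zigzag map. -/
def zigzagDomIn (C : CategoryOfPaths Λ) (S : Set Λ) (l : List (Λ × Λ)) : Set Λ :=
  {x | ∃ y, zigzagRelIn C S l x y}

/-- `𝒟(Λ₀,Λ)⁰_v`: nonempty zigzag sets with entries in `Λ₀` and source `v`,
computed inside the ambient subcategory `S`. -/
def relD0 (C : CategoryOfPaths Λ) (Λ₀ S : Set Λ) (w : Λ) : Set (Set Λ) :=
  {E | E.Nonempty ∧ ∃ (l : List (Λ × Λ)) (h : l ≠ []),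
    IsZigzag C l ∧ (∀ p ∈ l, p.1 ∈ Λ₀ ∧ p.2 ∈ Λ₀) ∧
    C.s (l.getLast h).2 = w ∧ E = zigzagDomIn C S l}

/-- `𝒜(Λ₀,Λ)_v`: the ring of sets generated by the zigzag sets. -/
def relAring (C : CategoryOfPaths Λ) (Λ₀ S : Set Λ) (w : Λ) : Set (Set Λ) :=
  setRingGenOn {α | α ∈ S ∧ C.r α = w} (relD0 C Λ₀ S w)

/-- A filter in a ring of sets. -/
def IsFilterIn {γ : Type v} (R U : Set (Set γ)) : Prop :=
  U.Nonempty ∧ U ⊆ R ∧ (∀ E ∈ U, E.Nonempty) ∧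
    (∀ E ∈ U, ∀ F ∈ U, E ∩ F ∈ U) ∧ (∀ E ∈ U, ∀ F ∈ R, E ⊆ F → F ∈ U)

/-- An ultrafilter in a ring of sets: a maximal filter. -/
def IsUltrafilterIn {γ : Type v} (R U : Set (Set γ)) : Prop :=
  IsFilterIn R U ∧ ∀ V, IsFilterIn R V → U ⊆ V → V = U

/-- A filter base in a ring of sets. -/
def IsFilterBaseIn {γ : Type v} (R B : Set (Set γ)) : Prop :=
  B.Nonempty ∧ B ⊆ R ∧ (∀ E ∈ B, E.Nonempty) ∧
    ∀ E ∈ B, ∀ F ∈ B, ∃ G ∈ B, G ⊆ E ∩ F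

/-- The filter generated by a filter base. -/
def filterGenBy {γ : Type v} (R B : Set (Set γ)) : Set (Set γ) :=
  {E | E ∈ R ∧ ∃ F ∈ B, F ⊆ E}

/-- An ultrafilter base in a ring of sets. -/
def IsUltrafilterBaseIn {γ : Type v} (R B : Set (Set γ)) : Prop :=
  IsFilterBaseIn R B ∧ IsUltrafilterIn R (filterGenBy R B)

/-- A Boolean ring homomorphism defined on a ring of sets `A` with values in a
generalized Boolean algebra. -/
def IsBRHomOn {γ : Type v} {R : Type*} [GeneralizedBooleanAlgebra R]
    (A : Set (Set γ)) (ν : Set γ → R) : Prop :=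
  ν ∅ = ⊥ ∧ (∀ E ∈ A, ∀ F ∈ A, ν (E ∪ F) = ν E ⊔ ν F) ∧
    (∀ E ∈ A, ∀ F ∈ A, ν (E ∩ F) = ν E ⊓ ν F) ∧
    (∀ E ∈ A, ∀ F ∈ A, ν (E \ F) = ν E \ ν F)

/-- `𝒜_v`: the ring of sets on `vΛ` generated by the tail sets. -/
def tailRing (C : CategoryOfPaths Λ) (w : Λ) : Set (Set Λ) :=
  setRingGenOn (pRng C w) {E | ∃ α, C.r α = w ∧ E = pTail C α}

/-- A directed subset. -/
def pDirected (C : CategoryOfPaths Λ) (x : Set Λ) : Prop :=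
  ∀ α ∈ x, ∀ β ∈ x, (pTail C α ∩ pTail C β ∩ x).Nonempty

/-- A hereditary subset. -/
def pHereditary (C : CategoryOfPaths Λ) (x : Set Λ) : Prop :=
  ∀ γ ∈ x, ∀ α : Λ, γ ∈ pTail C α → α ∈ x

/-- `vΛ*`: the nonempty directed hereditary subsets of `vΛ`. -/
def lamStar (C : CategoryOfPaths Λ) (w : Λ) : Set (Set Λ) :=
  {x | x.Nonempty ∧ x ⊆ pRng C w ∧ pDirected C x ∧ pHereditary C x}

/-- `vΛ**`: the maximal directed subsets of `vΛ`. -/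
def lamStarStar (C : CategoryOfPaths Λ) (w : Λ) : Set (Set Λ) :=
  {x | x ⊆ pRng C w ∧ pDirected C x ∧
    ∀ y, y ⊆ pRng C w → pDirected C y → x ⊆ y → y = x}

/-- `αx = ⋃_{γ ∈ x} [αγ]` for `x ∈ s(α)Λ*`. -/
def pMulStar (C : CategoryOfPaths Λ) (α : Λ) (x : Set Λ) : Set Λ :=
  {δ | ∃ γ ∈ x, C.s α = C.r γ ∧ C.comp α γ ∈ pTail C δ}

/-- `𝒰_{C,0}`. -/
def UC0 (C : CategoryOfPaths Λ) (w : Λ) (x : Set Λ) : Set (Set Λ) :=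
  {E | E ∈ tailRing C w ∧ ∃ α ∈ x, pTail C α ⊆ E}

/-- `𝒰_C`. -/
def UC (C : CategoryOfPaths Λ) (w : Λ) (x : Set Λ) : Set (Set Λ) :=
  {E | E ∈ tailRing C w ∧ ∃ α ∈ x, x ∩ pTail C α ⊆ E}

/-- `X_v = vΛ*` as a type. -/
abbrev Xv (C : CategoryOfPaths Λ) (w : Λ) : Type u := {x : Set Λ // x ∈ lamStar C w}

/-- The topology on `X_v` generated by the sets `Ê`, `E ∈ 𝒜_v`. -/
def XvTop (C : CategoryOfPaths Λ) (w : Λ) : TopologicalSpace (Xv C w) :=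
  TopologicalSpace.generateFrom
    {t | ∃ E ∈ tailRing C w, t = {x : Xv C w | E ∈ UC C w x.1}}

/-- The vertices of `Λ`. -/
abbrev Vertex (C : CategoryOfPaths Λ) : Type u := {w : Λ // C.r w = w}

/-- `X`: the disjoint union of the spaces `X_v`. -/
abbrev Xtotal (C : CategoryOfPaths Λ) : Type u := Σ w : Vertex C, Xv C w.1

/-- The disjoint union topology on `X`. -/
def XtotalTop (C : CategoryOfPaths Λ) : TopologicalSpace (Xtotal C) :=
  letI : ∀ w : Vertex C, TopologicalSpace (Xv C w.1) := fun w => XvTop C w.1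
  inferInstance

/-- The boundary `∂Λ`: the closure of `Λ**` in `X`. -/
def boundarySet (C : CategoryOfPaths Λ) : Set (Xtotal C) :=
  @closure _ (XtotalTop C) {p : Xtotal C | p.2.1 ∈ lamStarStar C p.1.1}

/-- An exhaustive subset of `vΛ`. -/
def ExhaustiveAt (C : CategoryOfPaths Λ) (w : Λ) (F : Set Λ) : Prop :=
  ∀ α, C.r α = w → ∃ β ∈ F, pMeets C α β

/-- An aperiodic point of `Λ*`. -/
def pAperiodic (C : CategoryOfPaths Λ) (x : Set Λ) : Prop :=
  ∀ α ∈ x, ∀ β ∈ x, α ≠ β → pShift C α x ≠ pShift C β x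

/-- A right-aperiodic point of `wΛ*`. -/
def pRightAperiodicAt (C : CategoryOfPaths Λ) (w : Λ) (x : Set Λ) : Prop :=
  ∀ α β : Λ, C.s α = w → C.s β = w → α ≠ β → pMulStar C α x ≠ pMulStar C β x

/-- The triples `(α, β, x)` with `s α = s β` and `x ∈ s(α)Λ*`. -/
abbrev pTrip (C : CategoryOfPaths Λ) : Type u :=
  {t : Λ × Λ × Set Λ // C.s t.1 = C.s t.2.1 ∧ t.2.2 ∈ lamStar C (C.s t.1)}

/-- The groupoid equivalence relation on triples. -/
def tripRel (C : CategoryOfPaths Λ) (t t' : pTrip C) : Prop :=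
  ∃ (z : Set Λ) (δ δ' : Λ),
    z ∈ lamStar C (C.s δ) ∧ z ∈ lamStar C (C.s δ') ∧
    C.s t.1.1 = C.r δ ∧ C.s t'.1.1 = C.r δ' ∧
    t.1.2.2 = pMulStar C δ z ∧ t'.1.2.2 = pMulStar C δ' z ∧
    C.comp t.1.1 δ = C.comp t'.1.1 δ' ∧
    C.comp t.1.2.1 δ = C.comp t'.1.2.1 δ'

/-- The ultrafilter space of `𝒜(Λ₀,Λ)_v`. -/
abbrev relXv (C : CategoryOfPaths Λ) (Λ₀ : Set Λ) (w : Λ) : Type u :=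
  {U : Set (Set Λ) // IsUltrafilterIn (relAring C Λ₀ Set.univ w) U}

/-- The topology on the ultrafilter space of `𝒜(Λ₀,Λ)_v` generated by the `Ê`. -/
def relXvTop (C : CategoryOfPaths Λ) (Λ₀ : Set Λ) (w : Λ) :
    TopologicalSpace (relXv C Λ₀ w) :=
  TopologicalSpace.generateFrom
    {t | ∃ E ∈ relAring C Λ₀ Set.univ w, t = {U : relXv C Λ₀ w | E ∈ U.1}}

namespace Stmt4Aux

variable {Λ : Type u} {γty : Type v}

section Basic

variable (C : CategoryOfPaths Λ)

lemma self_mem_pTail (α : Λ) : α ∈ pTail C α :=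
  ⟨C.s α, (C.r_s α).symm, (C.comp_id α).symm⟩

lemma r_of_mem_pTail {α x : Λ} (h : x ∈ pTail C α) : C.r x = C.r α := by
  obtain ⟨β, h1, rfl⟩ := h; exact C.r_comp h1

lemma pTail_subset {γ δ : Λ} (h : γ ∈ pTail C δ) : pTail C γ ⊆ pTail C δ := by
  obtain ⟨τ, h1, rfl⟩ := h
  rintro x ⟨ρ, h2, rfl⟩
  have hs : C.s τ = C.r ρ := by rw [← C.s_comp h1]; exact h2
  refine ⟨C.comp τ ρ, ?_, ?_⟩
  · rw [C.r_comp hs]; exact h1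
  · rw [C.comp_assoc h1 hs]

end Basic

section Ring

lemma isSetRingOn_powerset (S : Set γty) : IsSetRingOn S {E | E ⊆ S} := by
  refine ⟨⟨Set.empty_subset S, ?_, ?_, ?_⟩, fun E hE => hE⟩
  · exact fun E hE F hF => Set.union_subset hE hF
  · exact fun E hE F hF => (Set.inter_subset_left).trans hE
  · exact fun E hE F hF => (Set.diff_subset).trans hE

lemma setRingGenOn_isSetRingOn {S : Set γty} {G : Set (Set γty)}
    (hG : ∀ E ∈ G, E ⊆ S) : IsSetRingOn S (setRingGenOn S G) := by
  constructor
  · refine ⟨?_, ?_, ?_, ?_⟩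
    · exact fun R hR => hR.1.1.1
    · exact fun E hE F hF R hR => hR.1.1.2.1 E (hE R hR) F (hF R hR)
    · exact fun E hE F hF R hR => hR.1.1.2.2.1 E (hE R hR) F (hF R hR)
    · exact fun E hE F hF R hR => hR.1.1.2.2.2 E (hE R hR) F (hF R hR)
  · intro E hE
    exact hE {E | E ⊆ S} ⟨isSetRingOn_powerset S, hG⟩

lemma subset_setRingGenOn (S : Set γty) (G : Set (Set γty)) :
    G ⊆ setRingGenOn S G :=
  fun E hE R hR => hR.2 hE

lemma setRingGenOn_le {S : Set γty} {G R : Set (Set γty)} (h : IsSetRingOn S R)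
    (hGR : G ⊆ R) : setRingGenOn S G ⊆ R :=
  fun _ hE => hE R ⟨h, hGR⟩

end Ring

section Rel

variable {C : CategoryOfPaths Λ} {Λ₀ S : Set Λ}

lemma rel_mem_left : ∀ {l : List (Λ × Λ)} {x y : Λ},
    zigzagRelIn C S l x y → x ∈ S
  | [], _, _, h => h.2
  | _ :: rest, _, _, ⟨_, hz, _⟩ => rel_mem_left (l := rest) hz

lemma rel_mem_right : ∀ {l : List (Λ × Λ)} {x y : Λ},
    zigzagRelIn C S l x y → y ∈ S
  | [], _, _, h => h.1 ▸ h.2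
  | _ :: _, _, _, ⟨_, _, _, _, hy, _⟩ => hy

lemma rel_source : ∀ {l : List (Λ × Λ)} {x y : Λ},
    zigzagRelIn C S l x y → C.s x = C.s y
  | [], _, _, h => h.1 ▸ rfl
  | p :: rest, x, y, ⟨z, hz, h1, h2, _, h5⟩ => by
      have ih := rel_source (l := rest) hz
      have e1 : C.s (C.comp p.2 z) = C.s z := C.s_comp h1
      have e2 : C.s (C.comp p.1 y) = C.s y := C.s_comp h2
      rw [ih, ← e1, h5, e2]

lemma rel_mono (hSS : S ⊆ Λ₀) : ∀ {l : List (Λ × Λ)} {x y : Λ},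
    zigzagRelIn C S l x y → zigzagRelIn C Λ₀ l x y
  | [], _, _, h => ⟨h.1, hSS h.2⟩
  | _ :: rest, _, _, ⟨z, hz, h1, h2, hy, h5⟩ =>
      ⟨z, rel_mono hSS (l := rest) hz, h1, h2, hSS hy, h5⟩

lemma rel_head_range {p : Λ × Λ} {rest : List (Λ × Λ)} {x y : Λ}
    (h : zigzagRelIn C S (p :: rest) x y) : C.r y = C.s p.1 := by
  obtain ⟨z, _, _, h2, _, _⟩ := h; exact h2.symm

lemma rel_functional : ∀ {l : List (Λ × Λ)} {x y y' : Λ},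
    zigzagRelIn C S l x y → zigzagRelIn C S l x y' → y = y'
  | [], _, _, _, h, h' => h.1.symm.trans h'.1
  | p :: rest, x, y, y', ⟨z, hz, h1, h2, _, h5⟩, ⟨z', hz', h1', h2', _, h5'⟩ => by
      have : z = z' := rel_functional (l := rest) hz hz'
      subst this
      exact C.left_cancel h2 h2' (h5.symm.trans h5')

lemma rel_last : ∀ (l : List (Λ × Λ)) (hne : l ≠ []) {x y : Λ},
    zigzagRelIn C S l x y → C.r x = C.s (l.getLast hne).2
  | [p], _, x, y, ⟨z, hz, h1, _⟩ => by
      obtain ⟨rfl, -⟩ := hz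
      simpa using h1.symm
  | p :: q :: rest, _, x, y, ⟨z, hz, _⟩ => by
      have := rel_last (q :: rest) (by simp) hz
      rwa [List.getLast_cons (by simp : q :: rest ≠ [])]

lemma rel_shift : ∀ {l : List (Λ × Λ)} {x y δ : Λ},
    zigzagRelIn C Set.univ l x y → C.s x = C.r δ →
    zigzagRelIn C Set.univ l (C.comp x δ) (C.comp y δ)
  | [], _, _, _, h, _ => by obtain ⟨rfl, -⟩ := h; exact ⟨rfl, trivial⟩
  | p :: rest, x, y, δ, ⟨z, hz, h1, h2, _, h5⟩, hδ => by
      have hsz : C.s z = C.r δ := (rel_source hz).symm.trans hδ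
      have hsy : C.s y = C.r δ := by
        have e1 : C.s (C.comp p.2 z) = C.s z := C.s_comp h1
        have e2 : C.s (C.comp p.1 y) = C.s y := C.s_comp h2
        rw [← e2, h5.symm, e1, hsz]
      simp only [zigzagRelIn]
      refine ⟨C.comp z δ, rel_shift hz hδ, ?_, ?_, trivial, ?_⟩
      · rw [C.r_comp hsz]; exact h1
      · rw [C.r_comp hsy]; exact h2
      · rw [← C.comp_assoc h1 hsz, ← C.comp_assoc h2 hsy, h5]

end Rel

section Sub

variable {C : CategoryOfPaths Λ} {Λ₀ : Set Λ}

lemma rel_to_sub (hsub : IsSubcategory C Λ₀) (hfa : RelFinitelyAligned C Λ₀) :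
    ∀ {l : List (Λ × Λ)} {x y : Λ}, zigzagRelIn C Set.univ l x y →
    (∀ p ∈ l, p.1 ∈ Λ₀ ∧ p.2 ∈ Λ₀) → x ∈ Λ₀ → zigzagRelIn C Λ₀ l x y
  | [], _, _, h, _, hx => ⟨h.1, hx⟩
  | p :: rest, x, y, ⟨z, hz, h1, h2, _, h5⟩, hl, hx => by
      have hp := hl p List.mem_cons_self
      have ih : zigzagRelIn C Λ₀ rest x z :=
        rel_to_sub hsub hfa hz (fun q hq => hl q (List.mem_cons_of_mem p hq)) hx
      have hz0 : z ∈ Λ₀ := rel_mem_right ih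
      have hμ : C.comp p.2 z ∈ Λ₀ := hsub.comp_mem hp.2 hz0 h1
      have hmem : C.comp p.1 y ∈ pTail C p.1 ∩ Λ₀ := ⟨⟨y, h2, rfl⟩, h5 ▸ hμ⟩
      rw [hfa.2 p.1 hp.1] at hmem
      obtain ⟨w, hw0, hw1, hw2⟩ := hmem
      have : y = w := C.left_cancel h2 hw1 hw2
      exact ⟨z, ih, h1, h2, this ▸ hw0, h5⟩

lemma dom_inter_sub (hsub : IsSubcategory C Λ₀) (hfa : RelFinitelyAligned C Λ₀)
    {l : List (Λ × Λ)} (hl : ∀ p ∈ l, p.1 ∈ Λ₀ ∧ p.2 ∈ Λ₀) :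
    zigzagDomIn C Set.univ l ∩ Λ₀ = zigzagDomIn C Λ₀ l := by
  ext x
  constructor
  · rintro ⟨⟨y, hy⟩, hx⟩
    exact ⟨y, rel_to_sub hsub hfa hy hl hx⟩
  · rintro ⟨y, hy⟩
    exact ⟨⟨y, rel_mono (Set.subset_univ Λ₀) hy⟩, rel_mem_left hy⟩

/-- The core finite-alignment computation. -/
lemma core (hsub : IsSubcategory C Λ₀) (hfa : RelFinitelyAligned C Λ₀)
    {a b z : Λ} (ha : a ∈ Λ₀) (hb : b ∈ Λ₀) (hz : z ∈ Λ₀)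
    (hbz : C.s b = C.r z) :
    ∃ T : Finset Λ, (∀ ε ∈ T, ε ∈ Λ₀ ∧ C.s z = C.r ε ∧
        ∃ y ∈ Λ₀, C.s a = C.r y ∧ C.comp b (C.comp z ε) = C.comp a y) ∧
      {δ | C.s z = C.r δ ∧ C.comp b (C.comp z δ) ∈ pTail C a}
        = ⋃ ε ∈ T, pTail C ε := by
  classical
  set μ := C.comp b z with hμdef
  have hμ0 : μ ∈ Λ₀ := hsub.comp_mem hb hz hbz
  have hsμ : C.s μ = C.s z := C.s_comp hbz
  obtain ⟨G, hGfin, hGΛ₀, hG⟩ := hfa.1 μ hμ0 a ha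
  have hchoice : ∀ ε ∈ G, ∃ ε' : Λ, ε' ∈ Λ₀ ∧ C.s μ = C.r ε' ∧ ε = C.comp μ ε' ∧
      ∃ y ∈ Λ₀, C.s a = C.r y ∧ ε = C.comp a y := by
    intro ε hε
    have hεmem : ε ∈ pTail C μ ∩ pTail C a := by
      rw [hG]
      exact Set.mem_biUnion hε (self_mem_pTail C ε)
    have h1 : ε ∈ pMulSet C μ Λ₀ := by
      rw [← hfa.2 μ hμ0]; exact ⟨hεmem.1, hGΛ₀ hε⟩
    have h2 : ε ∈ pMulSet C a Λ₀ := by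
      rw [← hfa.2 a ha]; exact ⟨hεmem.2, hGΛ₀ hε⟩
    obtain ⟨ε', hε'0, hε'1, hε'2⟩ := h1
    obtain ⟨y, hy0, hy1, hy2⟩ := h2
    exact ⟨ε', hε'0, hε'1, hε'2, y, hy0, hy1, hy2⟩
  choose! f hf0 hf1 hf2 hf3 using hchoice
  refine ⟨hGfin.toFinset.image f, ?_, ?_⟩
  · intro ε' hε'
    simp only [Finset.mem_image, Set.Finite.mem_toFinset] at hε'
    obtain ⟨ε, hε, rfl⟩ := hε'
    have hszf : C.s z = C.r (f ε) := hsμ ▸ hf1 ε hε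
    refine ⟨hf0 ε hε, hszf, ?_⟩
    obtain ⟨y, hy0, hy1, hy2⟩ := hf3 ε hε
    refine ⟨y, hy0, hy1, ?_⟩
    rw [← C.comp_assoc hbz hszf, ← hμdef, ← hf2 ε hε]
    exact hy2
  · ext δ
    constructor
    · rintro ⟨hδ1, hδ2⟩
      have hμδ : C.s μ = C.r δ := hsμ.trans hδ1
      have hcomp : C.comp b (C.comp z δ) = C.comp μ δ :=
        (C.comp_assoc hbz hδ1).symm
      have hmem : C.comp μ δ ∈ pTail C μ ∩ pTail C a :=
        ⟨⟨δ, hμδ, rfl⟩, hcomp ▸ hδ2⟩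
      rw [hG, Set.mem_iUnion₂] at hmem
      obtain ⟨ε, hε, ρ, hρ1, hρ2⟩ := hmem
      have hεf : ε = C.comp μ (f ε) := hf2 ε hε
      have hsfε : C.s (f ε) = C.r ρ := by
        rw [← C.s_comp (hf1 ε hε), ← hεf]; exact hρ1
      have heq2 : C.comp μ δ = C.comp μ (C.comp (f ε) ρ) := by
        rw [hρ2]; conv_lhs => rw [hεf]
        rw [C.comp_assoc (hf1 ε hε) hsfε]
      have hδeq : δ = C.comp (f ε) ρ := by
        refine C.left_cancel hμδ ?_ heq2
        rw [C.r_comp hsfε]; exact hf1 ε hε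
      refine Set.mem_biUnion ?_ ⟨ρ, hsfε, hδeq⟩
      exact Finset.mem_image_of_mem f (hGfin.mem_toFinset.mpr hε)
    · intro hmem
      rw [Set.mem_iUnion₂] at hmem
      obtain ⟨ε', hε'img, hδ⟩ := hmem
      rw [Finset.mem_image] at hε'img
      obtain ⟨ε, hεT, rfl⟩ := hε'img
      have hε : ε ∈ G := hGfin.mem_toFinset.mp hεT
      obtain ⟨ρ, hρ1, rfl⟩ := hδ
      have hrδ : C.r (C.comp (f ε) ρ) = C.r (f ε) := C.r_comp hρ1
      have hδ1 : C.s z = C.r (C.comp (f ε) ρ) := by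
        rw [hrδ, ← hsμ]; exact hf1 ε hε
      refine ⟨hδ1, ?_⟩
      have hcomp : C.comp b (C.comp z (C.comp (f ε) ρ))
          = C.comp μ (C.comp (f ε) ρ) := (C.comp_assoc hbz hδ1).symm
      have hεmem : C.comp μ (C.comp (f ε) ρ) = C.comp ε ρ := by
        conv_rhs => rw [hf2 ε hε]
        rw [C.comp_assoc (hf1 ε hε) hρ1]
      have hsερ : C.s ε = C.r ρ := by
        rw [hf2 ε hε, C.s_comp (hf1 ε hε)]; exact hρ1
      have hmem2 : C.comp ε ρ ∈ pTail C ε := ⟨ρ, hsερ, rfl⟩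
      have hsub2 : pTail C ε ⊆ pTail C a := by
        have h' : pTail C ε ⊆ pTail C μ ∩ pTail C a := by
          rw [hG]; exact Set.subset_biUnion_of_mem hε
        exact h'.trans Set.inter_subset_right
      rw [hcomp, hεmem]
      exact hsub2 hmem2

end Sub

section LemB

variable {C : CategoryOfPaths Λ} {Λ₀ : Set Λ}

lemma rel_cons {S : Set Λ} {p : Λ × Λ} {rest : List (Λ × Λ)} {x y z : Λ}
    (h1 : zigzagRelIn C S rest x z) (h2 : C.s p.2 = C.r z)
    (h3 : C.s p.1 = C.r y) (h4 : y ∈ S)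
    (h5 : C.comp p.2 z = C.comp p.1 y) :
    zigzagRelIn C S (p :: rest) x y :=
  ⟨z, h1, h2, h3, h4, h5⟩

lemma rel_nil {S : Set Λ} {x : Λ} (hx : x ∈ S) :
    zigzagRelIn C S ([] : List (Λ × Λ)) x x := ⟨rfl, hx⟩

lemma lemB (hsub : IsSubcategory C Λ₀) (hfa : RelFinitelyAligned C Λ₀) :
    ∀ (l : List (Λ × Λ)), l ≠ [] → IsZigzag C l →
    (∀ p ∈ l, p.1 ∈ Λ₀ ∧ p.2 ∈ Λ₀) →
    ∃ T : Finset Λ,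
      (∀ t ∈ T, t ∈ Λ₀ ∧ ∃ y ∈ Λ₀, zigzagRelIn C Set.univ l t y) ∧
      zigzagDomIn C Set.univ l = ⋃ t ∈ T, pTail C t
  | [p], _, _, hl => by
      classical
      have hp := hl p List.mem_cons_self
      have hz0 : C.s p.2 ∈ Λ₀ := hsub.s_mem hp.2
      have hbz : C.s p.2 = C.r (C.s p.2) := (C.r_s p.2).symm
      obtain ⟨T, hT, hset⟩ := core hsub hfa hp.1 hp.2 hz0 hbz
      have hid : ∀ δ : Λ, C.s p.2 = C.r δ → C.comp (C.s p.2) δ = δ := by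
        intro δ h; rw [h]; exact C.id_comp δ
      refine ⟨T, ?_, ?_⟩
      · intro t ht
        obtain ⟨ht0, ht1, y, hy0, hy1, hy2⟩ := hT t ht
        have ht1' : C.s p.2 = C.r t := by rw [← C.s_s p.2]; exact ht1
        refine ⟨ht0, y, hy0, rel_cons (rel_nil trivial) ht1' hy1 trivial ?_⟩
        rw [← hid t ht1']; exact hy2
      · ext x
        constructor
        · rintro ⟨y, z, ⟨rfl, -⟩, h1, h2, -, h5⟩
          rw [← hset]
          refine ⟨by rw [C.s_s p.2]; exact h1, ?_⟩
          rw [hid x h1]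
          exact ⟨y, h2, h5⟩
        · intro hx
          rw [← hset] at hx
          obtain ⟨hδ1, hδ2⟩ := hx
          have h1 : C.s p.2 = C.r x := by rw [← C.s_s p.2]; exact hδ1
          rw [hid x h1] at hδ2
          obtain ⟨y, h2, h5⟩ := hδ2
          exact ⟨y, rel_cons (rel_nil trivial) h1 h2 trivial h5⟩
  | p :: q :: rest, _, hZ, hl => by
      classical
      set L := q :: rest with hLdef
      have hp := hl p List.mem_cons_self
      have hZL : IsZigzag C L :=
        ⟨fun x hx => hZ.1 x (List.mem_cons_of_mem p hx), hZ.2.tail⟩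
      have hchain : C.s q.1 = C.s p.2 := (List.isChain_cons_cons.mp hZ.2).1
      obtain ⟨T, hT, hdom⟩ := lemB hsub hfa L (by simp [hLdef]) hZL
        (fun x hx => hl x (List.mem_cons_of_mem p hx))
      have HY : ∀ γ ∈ T, ∃ y ∈ Λ₀, zigzagRelIn C Set.univ L γ y :=
        fun γ hγ => (hT γ hγ).2
      choose! Y hY0 hY1 using HY
      have hsγY : ∀ γ ∈ T, C.s γ = C.s (Y γ) := fun γ hγ => rel_source (hY1 γ hγ)
      have hp2Y : ∀ γ ∈ T, C.s p.2 = C.r (Y γ) := by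
        intro γ hγ
        have := rel_head_range (hY1 γ hγ)
        rw [this, hchain]
      have Hcore : ∀ γ ∈ T, ∃ Tγ : Finset Λ,
          (∀ ε ∈ Tγ, ε ∈ Λ₀ ∧ C.s (Y γ) = C.r ε ∧
            ∃ y ∈ Λ₀, C.s p.1 = C.r y ∧
              C.comp p.2 (C.comp (Y γ) ε) = C.comp p.1 y) ∧
          {δ | C.s (Y γ) = C.r δ ∧ C.comp p.2 (C.comp (Y γ) δ) ∈ pTail C p.1}
            = ⋃ ε ∈ Tγ, pTail C ε :=
        fun γ hγ => core hsub hfa hp.1 hp.2 (hY0 γ hγ) (hp2Y γ hγ)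
      choose! TT hTT1 hTT2 using Hcore
      refine ⟨T.attach.biUnion (fun γ => (TT γ.1).image (fun ε => C.comp γ.1 ε)),
        ?_, ?_⟩
      · intro t ht
        simp only [Finset.mem_biUnion, Finset.mem_attach, Finset.mem_image,
          true_and, Subtype.exists, exists_prop] at ht
        obtain ⟨γ, hγ, ε, hε, rfl⟩ := ht
        obtain ⟨hε0, hε1, y, hy0, hy1, hy2⟩ := hTT1 γ hγ ε hε
        have hsγε : C.s γ = C.r ε := (hsγY γ hγ).trans hε1
        refine ⟨hsub.comp_mem (hT γ hγ).1 hε0 hsγε, y, hy0, ?_⟩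
        refine rel_cons (rel_shift (hY1 γ hγ) hsγε) ?_ hy1 trivial hy2
        rw [C.r_comp hε1]; exact hp2Y γ hγ
      · ext x
        constructor
        · rintro ⟨y, z, hz, h1, h2, -, h5⟩
          have hxdom : x ∈ zigzagDomIn C Set.univ L := ⟨z, hz⟩
          rw [hdom, Set.mem_iUnion₂] at hxdom
          obtain ⟨γ, hγ, δ, hδ1, hδ2⟩ := hxdom
          have hshift : zigzagRelIn C Set.univ L x (C.comp (Y γ) δ) := by
            rw [hδ2]; exact rel_shift (hY1 γ hγ) hδ1
          have hzeq : z = C.comp (Y γ) δ := rel_functional hz hshift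
          have hδmem : δ ∈ {δ | C.s (Y γ) = C.r δ ∧
              C.comp p.2 (C.comp (Y γ) δ) ∈ pTail C p.1} := by
            refine ⟨(hsγY γ hγ).symm.trans hδ1, ?_⟩
            rw [← hzeq]
            exact ⟨y, h2, h5⟩
          rw [hTT2 γ hγ, Set.mem_iUnion₂] at hδmem
          obtain ⟨ε, hε, ρ, hρ1, hρ2⟩ := hδmem
          have hsγε : C.s γ = C.r ε :=
            (hsγY γ hγ).trans (hTT1 γ hγ ε hε).2.1
          have hxeq : x = C.comp (C.comp γ ε) ρ := by
            rw [hδ2, hρ2, ← C.comp_assoc hsγε hρ1]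
          rw [Set.mem_iUnion₂]
          refine ⟨C.comp γ ε, ?_, ρ, ?_, hxeq⟩
          · simp only [Finset.mem_biUnion, Finset.mem_attach, Finset.mem_image,
              true_and, Subtype.exists, exists_prop]
            exact ⟨γ, hγ, ε, hε, rfl⟩
          · rw [C.s_comp hsγε]; exact hρ1
        · intro hx
          rw [Set.mem_iUnion₂] at hx
          obtain ⟨t, ht, hxt⟩ := hx
          simp only [Finset.mem_biUnion, Finset.mem_attach, Finset.mem_image,
            true_and, Subtype.exists, exists_prop] at ht
          obtain ⟨γ, hγ, ε, hε, rfl⟩ := ht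
          obtain ⟨ρ, hρ1, rfl⟩ := hxt
          have hsγε : C.s γ = C.r ε :=
            (hsγY γ hγ).trans (hTT1 γ hγ ε hε).2.1
          have hsερ : C.s ε = C.r ρ := by
            rw [← C.s_comp hsγε]; exact hρ1
          set δ := C.comp ε ρ with hδdef
          have hδmem : δ ∈ {δ | C.s (Y γ) = C.r δ ∧
              C.comp p.2 (C.comp (Y γ) δ) ∈ pTail C p.1} := by
            rw [hTT2 γ hγ, Set.mem_iUnion₂]
            exact ⟨ε, hε, ρ, hsερ, rfl⟩
          obtain ⟨hd1, hd2⟩ := hδmem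
          obtain ⟨w, hw1, hw2⟩ := hd2
          have hsγδ : C.s γ = C.r δ := (hsγY γ hγ).trans hd1
          have hxeq : C.comp (C.comp γ ε) ρ = C.comp γ δ :=
            C.comp_assoc hsγε hsερ
          refine ⟨w, ?_⟩
          refine rel_cons (z := C.comp (Y γ) δ) ?_ ?_ hw1 trivial hw2
          · rw [hxeq]; exact rel_shift (hY1 γ hγ) hsγδ
          · rw [C.r_comp hd1]; exact hp2Y γ hγ

end LemB

section NF

variable (C : CategoryOfPaths Λ) (Λ₀ : Set Λ) (v : Λ)

/-- A basic "piece": a tail minus a finite union of tails. -/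
def piece (q : Λ × Finset Λ) : Set Λ := pTail C q.1 \ ⋃ δ ∈ q.2, pTail C δ

def okPair (q : Λ × Finset Λ) : Prop :=
  q.1 ∈ Λ₀ ∧ C.r q.1 = v ∧ ∀ δ ∈ q.2, δ ∈ Λ₀

/-- Normal-form sets: finite unions of pieces. -/
def NF : Set (Set Λ) :=
  {E | ∃ F : Finset (Λ × Finset Λ), (∀ q ∈ F, okPair C Λ₀ v q) ∧
    E = ⋃ q ∈ F, piece C q}

variable {C Λ₀ v}

lemma nf_empty : ∅ ∈ NF C Λ₀ v := ⟨∅, by simp, by simp⟩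

lemma nf_piece {q : Λ × Finset Λ} (hq : okPair C Λ₀ v q) :
    piece C q ∈ NF C Λ₀ v := ⟨{q}, by simpa using hq, by simp⟩

lemma nf_tail {δ : Λ} (hδ : δ ∈ Λ₀) (hr : C.r δ = v) :
    pTail C δ ∈ NF C Λ₀ v := by
  have : pTail C δ = piece C (δ, ∅) := by simp [piece]
  rw [this]
  exact nf_piece ⟨hδ, hr, by simp⟩

lemma nf_union {E E' : Set Λ} (hE : E ∈ NF C Λ₀ v) (hE' : E' ∈ NF C Λ₀ v) :
    E ∪ E' ∈ NF C Λ₀ v := by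
  classical
  obtain ⟨F, hF, rfl⟩ := hE
  obtain ⟨F', hF', rfl⟩ := hE'
  refine ⟨F ∪ F', ?_, ?_⟩
  · intro q hq
    rcases Finset.mem_union.mp hq with h | h
    exacts [hF q h, hF' q h]
  · rw [Finset.set_biUnion_union]

lemma nf_rng {E : Set Λ} (hE : E ∈ NF C Λ₀ v) : ∀ x ∈ E, C.r x = v := by
  obtain ⟨F, hF, rfl⟩ := hE
  intro x hx
  rw [Set.mem_iUnion₂] at hx
  obtain ⟨q, hq, hx1, -⟩ := hx
  rw [r_of_mem_pTail C hx1]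
  exact (hF q hq).2.1

lemma piece_inter_piece (hfa : RelFinitelyAligned C Λ₀)
    {q q' : Λ × Finset Λ} (hq : okPair C Λ₀ v q) (hq' : okPair C Λ₀ v q') :
    piece C q ∩ piece C q' ∈ NF C Λ₀ v := by
  classical
  obtain ⟨G, hGfin, hGΛ₀, hG⟩ := hfa.1 q.1 hq.1 q'.1 hq'.1
  have hGx : ∀ x, (x ∈ pTail C q.1 ∧ x ∈ pTail C q'.1) ↔ ∃ ε ∈ G, x ∈ pTail C ε := by
    intro x
    rw [← Set.mem_inter_iff, hG]
    simp
  refine ⟨hGfin.toFinset.image (fun ε => (ε, q.2 ∪ q'.2)), ?_, ?_⟩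
  · intro qq hqq
    simp only [Finset.mem_image, Set.Finite.mem_toFinset] at hqq
    obtain ⟨ε, hε, rfl⟩ := hqq
    have hεmem : ε ∈ pTail C q.1 ∧ ε ∈ pTail C q'.1 :=
      (hGx ε).mpr ⟨ε, hε, self_mem_pTail C ε⟩
    refine ⟨hGΛ₀ hε, ?_, ?_⟩
    · rw [r_of_mem_pTail C hεmem.1]; exact hq.2.1
    · intro δ hδ
      rcases Finset.mem_union.mp hδ with h | h
      exacts [hq.2.2 δ h, hq'.2.2 δ h]
  · ext x
    have hx := hGx x
    simp only [piece, Set.mem_inter_iff, Set.mem_diff, Set.mem_iUnion,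
      Finset.mem_union, Finset.mem_image, Set.Finite.mem_toFinset,
      exists_prop] at *
    constructor
    · rintro ⟨⟨hx1, hx2⟩, hx3, hx4⟩
      obtain ⟨ε, hε, hxε⟩ := hx.mp ⟨hx1, hx3⟩
      refine ⟨(ε, q.2 ∪ q'.2), ⟨ε, hε, rfl⟩, hxε, ?_⟩
      rintro ⟨δ, hδ, hxδ⟩
      rcases Finset.mem_union.mp hδ with h | h
      exacts [hx2 ⟨δ, h, hxδ⟩, hx4 ⟨δ, h, hxδ⟩]
    · rintro ⟨qq, ⟨ε, hε, rfl⟩, hxε, hid⟩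
      obtain ⟨hx1, hx3⟩ := hx.mpr ⟨ε, hε, hxε⟩
      refine ⟨⟨hx1, ?_⟩, hx3, ?_⟩
      · rintro ⟨δ, hδ, hxδ⟩
        exact hid ⟨δ, Finset.mem_union.mpr (Or.inl hδ), hxδ⟩
      · rintro ⟨δ, hδ, hxδ⟩
        exact hid ⟨δ, Finset.mem_union.mpr (Or.inr hδ), hxδ⟩

lemma biUnion_inter_piece (hfa : RelFinitelyAligned C Λ₀)
    (F : Finset (Λ × Finset Λ)) (hF : ∀ q' ∈ F, okPair C Λ₀ v q')
    {q : Λ × Finset Λ} (hq : okPair C Λ₀ v q) :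
    (⋃ q' ∈ F, piece C q') ∩ piece C q ∈ NF C Λ₀ v := by
  classical
  induction F using Finset.induction_on with
  | empty => simpa using nf_empty
  | @insert a F ha ih =>
      rw [Finset.set_biUnion_insert, Set.union_inter_distrib_right]
      exact nf_union
        (piece_inter_piece hfa (hF a (Finset.mem_insert_self a F)) hq)
        (ih (fun q' hq' => hF q' (Finset.mem_insert_of_mem hq')))

lemma nf_inter (hfa : RelFinitelyAligned C Λ₀)
    {E E' : Set Λ} (hE : E ∈ NF C Λ₀ v) (hE' : E' ∈ NF C Λ₀ v) :
    E ∩ E' ∈ NF C Λ₀ v := by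
  classical
  obtain ⟨F', hF', rfl⟩ := hE'
  induction F' using Finset.induction_on with
  | empty => simpa using nf_empty
  | @insert a F ha ih =>
      rw [Finset.set_biUnion_insert, Set.inter_union_distrib_left]
      refine nf_union ?_ (ih (fun q' hq' => hF' q' (Finset.mem_insert_of_mem hq')))
      obtain ⟨F0, hF0, rfl⟩ := hE
      exact biUnion_inter_piece hfa F0 hF0 (hF' a (Finset.mem_insert_self a F))

lemma nf_inter_tail (hfa : RelFinitelyAligned C Λ₀)
    {E : Set Λ} (hE : E ∈ NF C Λ₀ v) {δ : Λ} (hδ : δ ∈ Λ₀) :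
    E ∩ pTail C δ ∈ NF C Λ₀ v := by
  by_cases hr : C.r δ = v
  · exact nf_inter hfa hE (nf_tail hδ hr)
  · have : E ∩ pTail C δ = ∅ := by
      ext x
      simp only [Set.mem_inter_iff, Set.mem_empty_iff_false, iff_false, not_and]
      intro hxE hxδ
      exact hr ((r_of_mem_pTail C hxδ).symm.trans (nf_rng hE x hxE))
    rw [this]; exact nf_empty

lemma nf_diff_tail {E : Set Λ} (hE : E ∈ NF C Λ₀ v) {δ : Λ} (hδ : δ ∈ Λ₀) :
    E \ pTail C δ ∈ NF C Λ₀ v := by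
  classical
  obtain ⟨F, hF, rfl⟩ := hE
  induction F using Finset.induction_on with
  | empty => simpa using nf_empty
  | @insert a F ha ih =>
      rw [Finset.set_biUnion_insert, Set.union_diff_distrib]
      refine nf_union ?_ (ih (fun q' hq' => hF q' (Finset.mem_insert_of_mem hq')))
      have hok := hF a (Finset.mem_insert_self a F)
      have hpe : piece C a \ pTail C δ = piece C (a.1, insert δ a.2) := by
        ext x
        simp only [piece, Set.mem_diff, Set.mem_iUnion, Finset.mem_insert,
          exists_prop]
        constructor
        · rintro ⟨⟨hx1, hx2⟩, hx3⟩
          refine ⟨hx1, ?_⟩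
          rintro ⟨ρ, rfl | hρ, hxρ⟩
          exacts [hx3 hxρ, hx2 ⟨ρ, hρ, hxρ⟩]
        · rintro ⟨hx1, hx2⟩
          refine ⟨⟨hx1, ?_⟩, ?_⟩
          · rintro ⟨ρ, hρ, hxρ⟩; exact hx2 ⟨ρ, Or.inr hρ, hxρ⟩
          · intro hxδ; exact hx2 ⟨δ, Or.inl rfl, hxδ⟩
      rw [hpe]
      refine nf_piece ⟨hok.1, hok.2.1, ?_⟩
      intro ρ hρ
      rcases Finset.mem_insert.mp hρ with rfl | hρ'
      exacts [hδ, hok.2.2 ρ hρ']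

lemma nf_diff_piece (hfa : RelFinitelyAligned C Λ₀)
    {E : Set Λ} (hE : E ∈ NF C Λ₀ v) {q : Λ × Finset Λ}
    (hq : okPair C Λ₀ v q) : E \ piece C q ∈ NF C Λ₀ v := by
  classical
  have : E \ piece C q = (E \ pTail C q.1) ∪ (E ∩ ⋃ δ ∈ q.2, pTail C δ) := by
    unfold piece
    rw [Set.diff_diff_right]
  rw [this]
  refine nf_union (nf_diff_tail hE hq.1) ?_
  have hI : ∀ (H : Finset Λ), (∀ δ ∈ H, δ ∈ Λ₀) →
      E ∩ (⋃ δ ∈ H, pTail C δ) ∈ NF C Λ₀ v := by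
    intro H
    induction H using Finset.induction_on with
    | empty => intro _; simpa using nf_empty
    | @insert a H ha ih =>
        intro hH
        rw [Finset.set_biUnion_insert, Set.inter_union_distrib_left]
        exact nf_union (nf_inter_tail hfa hE (hH a (Finset.mem_insert_self a H)))
          (ih (fun δ hδ => hH δ (Finset.mem_insert_of_mem hδ)))
  exact hI q.2 hq.2.2

lemma nf_diff (hfa : RelFinitelyAligned C Λ₀)
    {E E' : Set Λ} (hE : E ∈ NF C Λ₀ v) (hE' : E' ∈ NF C Λ₀ v) :
    E \ E' ∈ NF C Λ₀ v := by
  classical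
  obtain ⟨F', hF', rfl⟩ := hE'
  induction F' using Finset.induction_on generalizing E with
  | empty => simpa using hE
  | @insert a F ha ih =>
      rw [Finset.set_biUnion_insert, ← Set.diff_diff]
      exact ih (nf_diff_piece hfa hE (hF' a (Finset.mem_insert_self a F)))
        (fun q' hq' => hF' q' (Finset.mem_insert_of_mem hq'))

lemma nf_nonempty_meets {E : Set Λ} (hE : E ∈ NF C Λ₀ v)
    (hne : E.Nonempty) : ∃ x ∈ E, x ∈ Λ₀ := by
  obtain ⟨F, hF, rfl⟩ := hE
  obtain ⟨x, hx⟩ := hne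
  rw [Set.mem_iUnion₂] at hx
  obtain ⟨q, hq, hx1, hx2⟩ := hx
  refine ⟨q.1, ?_, (hF q hq).1⟩
  rw [Set.mem_iUnion₂]
  refine ⟨q, hq, self_mem_pTail C q.1, ?_⟩
  intro hmem
  rw [Set.mem_iUnion₂] at hmem
  obtain ⟨δ, hδ, hq1δ⟩ := hmem
  apply hx2
  rw [Set.mem_iUnion₂]
  exact ⟨δ, hδ, pTail_subset C hq1δ hx1⟩

end NF

section Assemble

variable {C : CategoryOfPaths Λ} {Λ₀ : Set Λ} {v : Λ}

lemma dom_subset {S : Set Λ} {l : List (Λ × Λ)} (hne : l ≠ [])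
    (hlast : C.s (l.getLast hne).2 = v) :
    zigzagDomIn C S l ⊆ {α | α ∈ S ∧ C.r α = v} := by
  rintro x ⟨y, hy⟩
  exact ⟨rel_mem_left hy, (rel_last l hne hy).trans hlast⟩

lemma relD0_subset (S : Set Λ) :
    ∀ E ∈ relD0 C Λ₀ S v, E ⊆ {α | α ∈ S ∧ C.r α = v} := by
  rintro E ⟨-, l, hne, -, -, hlast, rfl⟩
  exact dom_subset hne hlast

lemma relAring_isSetRingOn (S : Set Λ) :
    IsSetRingOn {α | α ∈ S ∧ C.r α = v} (relAring C Λ₀ S v) :=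
  setRingGenOn_isSetRingOn (relD0_subset S)

lemma nf_biUnion_tails (T : Finset Λ) (h : ∀ t ∈ T, t ∈ Λ₀ ∧ C.r t = v) :
    (⋃ t ∈ T, pTail C t) ∈ NF C Λ₀ v := by
  classical
  induction T using Finset.induction_on with
  | empty => simpa using nf_empty
  | @insert a T ha ih =>
      rw [Finset.set_biUnion_insert]
      exact nf_union (nf_tail (h a (Finset.mem_insert_self a T)).1
        (h a (Finset.mem_insert_self a T)).2)
        (ih (fun t ht => h t (Finset.mem_insert_of_mem ht)))

lemma ring_subset_NF (hsub : IsSubcategory C Λ₀) (hfa : RelFinitelyAligned C Λ₀) :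
    relAring C Λ₀ Set.univ v ⊆
      {E | E ⊆ {α | α ∈ (Set.univ : Set Λ) ∧ C.r α = v} ∧ E ∈ NF C Λ₀ v} := by
  refine setRingGenOn_le ⟨⟨⟨Set.empty_subset _, nf_empty⟩, ?_, ?_, ?_⟩,
      fun E hE => hE.1⟩ ?_
  · rintro E ⟨hE1, hE2⟩ F ⟨hF1, hF2⟩
    exact ⟨Set.union_subset hE1 hF1, nf_union hE2 hF2⟩
  · rintro E ⟨hE1, hE2⟩ F ⟨hF1, hF2⟩
    exact ⟨Set.inter_subset_left.trans hE1, nf_inter hfa hE2 hF2⟩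
  · rintro E ⟨hE1, hE2⟩ F ⟨hF1, hF2⟩
    exact ⟨Set.diff_subset.trans hE1, nf_diff hfa hE2 hF2⟩
  · rintro E ⟨hne, l, hlne, hZ, hl, hlast, rfl⟩
    refine ⟨dom_subset hlne hlast, ?_⟩
    obtain ⟨T, hT, hdom⟩ := lemB hsub hfa l hlne hZ hl
    rw [hdom]
    refine nf_biUnion_tails T ?_
    intro t ht
    refine ⟨(hT t ht).1, ?_⟩
    have : t ∈ zigzagDomIn C Set.univ l := by
      obtain ⟨-, y, -, hy⟩ := hT t ht
      exact ⟨y, hy⟩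
    exact (hdom ▸ Set.mem_biUnion ht (self_mem_pTail C t) :
        t ∈ zigzagDomIn C Set.univ l) |> (fun h => (dom_subset hlne hlast h).2)

lemma inter_inter_distrib (E F G : Set Λ) : (E ∩ F) ∩ G = (E ∩ G) ∩ (F ∩ G) := by
  ext x; simp only [Set.mem_inter_iff]; tauto

lemma diff_inter_distrib (E F G : Set Λ) : (E \ F) ∩ G = (E ∩ G) \ (F ∩ G) := by
  ext x; simp only [Set.mem_inter_iff, Set.mem_diff]; tauto

lemma ring_mapsTo (hsub : IsSubcategory C Λ₀) (hfa : RelFinitelyAligned C Λ₀) :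
    relAring C Λ₀ Set.univ v ⊆
      {E | E ⊆ {α | α ∈ (Set.univ : Set Λ) ∧ C.r α = v} ∧
        E ∩ Λ₀ ∈ relAring C Λ₀ Λ₀ v} := by
  have h0 := (relAring_isSetRingOn (C := C) (Λ₀ := Λ₀) (v := v) Λ₀).1
  refine setRingGenOn_le ⟨⟨⟨Set.empty_subset _, by simpa using h0.1⟩, ?_, ?_, ?_⟩,
      fun E hE => hE.1⟩ ?_
  · rintro E ⟨hE1, hE2⟩ F ⟨hF1, hF2⟩
    refine ⟨Set.union_subset hE1 hF1, ?_⟩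
    rw [Set.union_inter_distrib_right]
    exact h0.2.1 _ hE2 _ hF2
  · rintro E ⟨hE1, hE2⟩ F ⟨hF1, hF2⟩
    refine ⟨Set.inter_subset_left.trans hE1, ?_⟩
    rw [inter_inter_distrib]
    exact h0.2.2.1 _ hE2 _ hF2
  · rintro E ⟨hE1, hE2⟩ F ⟨hF1, hF2⟩
    refine ⟨Set.diff_subset.trans hE1, ?_⟩
    rw [diff_inter_distrib]
    exact h0.2.2.2 _ hE2 _ hF2
  · rintro E ⟨hne, l, hlne, hZ, hl, hlast, rfl⟩
    refine ⟨dom_subset hlne hlast, ?_⟩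
    rw [dom_inter_sub hsub hfa hl]
    by_cases hne0 : (zigzagDomIn C Λ₀ l).Nonempty
    · exact subset_setRingGenOn _ _ ⟨hne0, l, hlne, hZ, hl, hlast, rfl⟩
    · rw [Set.not_nonempty_iff_eq_empty] at hne0
      rw [hne0]
      exact h0.1

lemma ring_surj (hsub : IsSubcategory C Λ₀) (hfa : RelFinitelyAligned C Λ₀) :
    relAring C Λ₀ Λ₀ v ⊆
      {F | F ⊆ {α | α ∈ Λ₀ ∧ C.r α = v} ∧
        ∃ E ∈ relAring C Λ₀ Set.univ v, E ∩ Λ₀ = F} := by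
  have hU := (relAring_isSetRingOn (C := C) (Λ₀ := Λ₀) (v := v) Set.univ).1
  refine setRingGenOn_le ⟨⟨⟨Set.empty_subset _, ∅, hU.1, by simp⟩, ?_, ?_, ?_⟩,
      fun E hE => hE.1⟩ ?_
  · rintro F ⟨hF1, E, hE, rfl⟩ F' ⟨hF1', E', hE', rfl⟩
    refine ⟨Set.union_subset hF1 hF1', E ∪ E', hU.2.1 _ hE _ hE', ?_⟩
    rw [Set.union_inter_distrib_right]
  · rintro F ⟨hF1, E, hE, rfl⟩ F' ⟨hF1', E', hE', rfl⟩
    refine ⟨Set.inter_subset_left.trans hF1, E ∩ E', hU.2.2.1 _ hE _ hE', ?_⟩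
    rw [inter_inter_distrib]
  · rintro F ⟨hF1, E, hE, rfl⟩ F' ⟨hF1', E', hE', rfl⟩
    refine ⟨Set.diff_subset.trans hF1, E \ E', hU.2.2.2 _ hE _ hE', ?_⟩
    rw [diff_inter_distrib]
  · rintro F ⟨hne, l, hlne, hZ, hl, hlast, rfl⟩
    refine ⟨dom_subset hlne hlast, zigzagDomIn C Set.univ l, ?_, ?_⟩
    · refine subset_setRingGenOn _ _ ⟨?_, l, hlne, hZ, hl, hlast, rfl⟩
      obtain ⟨x, y, hy⟩ := hne
      exact ⟨x, y, rel_mono (Set.subset_univ Λ₀) hy⟩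
    · exact dom_inter_sub hsub hfa hl

end Assemble

end Stmt4Aux

open Stmt4Aux
/-- Proposition 3.6. For a finitely aligned relative category
of paths `(Λ₀, Λ)`, the map `E ↦ E ∩ Λ₀` restricts to a ring isomorphism
`𝒜(Λ₀,Λ)_v → 𝒜(Λ₀)_v`, equivariant for shifts by elements of `Λ₀`. -/
theorem statement4 {Λ : Type u} (C : CategoryOfPaths Λ) (Λ₀ : Set Λ)
    (hsub : IsSubcategory C Λ₀) (hfa : RelFinitelyAligned C Λ₀)
    (v : Λ) (hv0 : v ∈ Λ₀) (hv : C.r v = v) :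
    Set.BijOn (fun E => E ∩ Λ₀) (relAring C Λ₀ Set.univ v) (relAring C Λ₀ Λ₀ v) ∧
    (∀ E ∈ relAring C Λ₀ Set.univ v, ∀ F ∈ relAring C Λ₀ Set.univ v,
      (E ∪ F) ∩ Λ₀ = (E ∩ Λ₀) ∪ (F ∩ Λ₀) ∧
      (E ∩ F) ∩ Λ₀ = (E ∩ Λ₀) ∩ (F ∩ Λ₀) ∧
      (E \ F) ∩ Λ₀ = (E ∩ Λ₀) \ (F ∩ Λ₀)) ∧
    (∀ α ∈ Λ₀, ∀ E ∈ relAring C Λ₀ Set.univ (C.s α),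
      pMulSet C α E ∩ Λ₀ = pMulSet C α (E ∩ Λ₀)) ∧
    (∀ α ∈ Λ₀, ∀ E ∈ relAring C Λ₀ Set.univ (C.r α),
      pShift C α E ∩ Λ₀ = pShiftIn C Λ₀ α ((E ∩ Λ₀) ∩ pMulSet C α Λ₀)) := by
  classical
  have hU := (relAring_isSetRingOn (C := C) (Λ₀ := Λ₀) (v := v) Set.univ).1
  have key : ∀ E ∈ relAring C Λ₀ Set.univ v, ∀ F ∈ relAring C Λ₀ Set.univ v,
      E ∩ Λ₀ = F ∩ Λ₀ → E ⊆ F := by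
    intro E hE F hF h
    have hdiff := hU.2.2.2 E hE F hF
    have hNF := (ring_subset_NF hsub hfa hdiff).2
    have hempty : (E \ F) ∩ Λ₀ = ∅ := by
      rw [diff_inter_distrib, h]; simp
    rw [← Set.diff_eq_empty]
    by_contra hcon
    obtain ⟨x, hx1, hx2⟩ := nf_nonempty_meets hNF (Set.nonempty_iff_ne_empty.mpr hcon)
    have hmem : x ∈ (E \ F) ∩ Λ₀ := ⟨hx1, hx2⟩
    rw [hempty] at hmem
    exact hmem
  refine ⟨⟨?_, ?_, ?_⟩, ?_, ?_, ?_⟩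
  · intro E hE
    exact ((ring_mapsTo hsub hfa) hE).2
  · intro E hE F hF h
    exact Set.Subset.antisymm (key E hE F hF h) (key F hF E hE h.symm)
  · intro F hF
    obtain ⟨-, E, hE, hEF⟩ := (ring_surj hsub hfa) hF
    exact ⟨E, hE, hEF⟩
  · intro E _ F _
    exact ⟨Set.union_inter_distrib_right E F Λ₀, inter_inter_distrib E F Λ₀,
      diff_inter_distrib E F Λ₀⟩
  · intro α hα E _
    ext x
    constructor
    · rintro ⟨⟨β, hβE, h1, rfl⟩, hx0⟩
      have hmem : C.comp α β ∈ pTail C α ∩ Λ₀ := ⟨⟨β, h1, rfl⟩, hx0⟩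
      rw [hfa.2 α hα] at hmem
      obtain ⟨γ, hγ0, hγ1, hγ2⟩ := hmem
      have hβγ : β = γ := C.left_cancel h1 hγ1 hγ2
      exact ⟨β, ⟨hβE, hβγ ▸ hγ0⟩, h1, rfl⟩
    · rintro ⟨β, ⟨hβE, hβ0⟩, h1, rfl⟩
      exact ⟨⟨β, hβE, h1, rfl⟩, hsub.comp_mem hα hβ0 h1⟩
  · intro α hα E _
    ext β
    simp only [pShift, pShiftIn, Set.mem_inter_iff, Set.mem_setOf_eq]
    constructor
    · rintro ⟨⟨h1, h2⟩, hβ0⟩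
      exact ⟨hβ0, h1, ⟨⟨h2, hsub.comp_mem hα hβ0 h1⟩, β, hβ0, h1, rfl⟩⟩
    · rintro ⟨hβ0, h1, ⟨⟨h2, -⟩, -⟩⟩
      exact ⟨⟨h1, h2⟩, hβ0⟩
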